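/- Let v₁,…,v_p span ℝ^n, Q = Σ v_i v_iᵀ, and let B₁ = I_n, B₂,…,B_r be n×n real matrices. A permutation σ of {1,…,p} admits a matrix A ∈ GL_n(ℝ) with A v_i = v_{σ(i)} for all i and A B_k = B_k A for all k, if and only if v_iᵀ Q⁻¹ B_k v_j = v_{σ(i)}ᵀ Q⁻¹ B_k v_{σ(j)} for all 1 ≤ i, j ≤ p and 1 ≤ k ≤ r. -/

import Mathlib

open Matrix

noncomputable section

variable {n p : ℕ}

/-- The polyhedral cone generated by the vectors `v i`. -/
def coneOf (v : Fin p → (Fin n → ℝ)) : Set (Fin n → ℝ) :=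
  {x | ∃ c : Fin p → ℝ, (∀ i, 0 ≤ c i) ∧ x = ∑ i, c i • v i}

/-- The cone contains no nontrivial linear subspace. -/
def IsPointedCone (v : Fin p → (Fin n → ℝ)) : Prop :=
  ∀ x ∈ coneOf v, -x ∈ coneOf v → x = 0

/-- The generators span the ambient space. -/
def FullDim (v : Fin p → (Fin n → ℝ)) : Prop :=
  Submodule.span ℝ (Set.range v) = ⊤

/-- `v i` generates an extreme ray of the cone. -/
def IsExtremeRayGen (v : Fin p → (Fin n → ℝ)) (i : Fin p) : Prop :=
  v i ≠ 0 ∧ ∀ x ∈ coneOf v, ∀ y ∈ coneOf v, x + y = v i → ∃ a : ℝ, 0 ≤ a ∧ x = a • v i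

/-- `v` is a family of generators of the pairwise distinct extreme rays of a
full-dimensional pointed polyhedral cone. -/
def GoodCone (v : Fin p → (Fin n → ℝ)) : Prop :=
  FullDim v ∧ IsPointedCone v ∧ (∀ i, IsExtremeRayGen v i) ∧
    ∀ i j, i ≠ j → ∀ c : ℝ, 0 < c → v i ≠ c • v j

/-- The cone is decomposable: the space splits as a direct sum with every
generator lying in one of the two factors. -/
def Decomposable (v : Fin p → (Fin n → ℝ)) : Prop :=
  ∃ V₁ V₂ : Submodule ℝ (Fin n → ℝ), V₁ ≠ ⊥ ∧ V₂ ≠ ⊥ ∧ IsCompl V₁ V₂ ∧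
    ∀ i, v i ∈ V₁ ∨ v i ∈ V₂

/-- The component of the cone inside the subspace `W` is decomposable. -/
def DecomposableWithin (W : Submodule ℝ (Fin n → ℝ)) (v : Fin p → (Fin n → ℝ)) : Prop :=
  ∃ W₁ W₂ : Submodule ℝ (Fin n → ℝ), W₁ ≠ ⊥ ∧ W₂ ≠ ⊥ ∧ W₁ ⊔ W₂ = W ∧ W₁ ⊓ W₂ = ⊥ ∧
    ∀ i, v i ∈ W → (v i ∈ W₁ ∨ v i ∈ W₂)

/-- Projective equivalence of two cones given by generators: an invertible
linear map sends the extreme rays of one bijectively onto those of the other. -/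
def ProjEquiv (v w : Fin p → (Fin n → ℝ)) : Prop :=
  ∃ A : (Fin n → ℝ) ≃ₗ[ℝ] (Fin n → ℝ), ∃ σ : Equiv.Perm (Fin p), ∃ lam : Fin p → ℝ,
    (∀ i, 0 < lam i) ∧ ∀ i, A (v i) = lam i • w (σ i)

/-- `A ∈ GL(C)`: an invertible matrix mapping the cone onto itself. -/
def PreservesCone (A : Matrix (Fin n) (Fin n) ℝ) (v : Fin p → (Fin n → ℝ)) : Prop :=
  IsUnit A.det ∧ (fun x => A *ᵥ x) '' coneOf v = coneOf v

/-- `A` maps the ray `ℝ₊ v i` onto the ray `ℝ₊ v (σ i)` for every `i`. -/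
def MapsRays (A : Matrix (Fin n) (Fin n) ℝ) (v : Fin p → (Fin n → ℝ))
    (σ : Equiv.Perm (Fin p)) : Prop :=
  ∀ i, ∃ c : ℝ, 0 < c ∧ A *ᵥ v i = c • v (σ i)

/-- `σ ∈ Proj(C)`: the permutation of extreme rays is induced by some `A ∈ GL(C)`. -/
def ProjSym (v : Fin p → (Fin n → ℝ)) (σ : Equiv.Perm (Fin p)) : Prop :=
  ∃ A : Matrix (Fin n) (Fin n) ℝ, PreservesCone A v ∧ MapsRays A v σ

/-- `F` is a face of the cone: intersection with a supporting hyperplane. -/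
def IsFace (v : Fin p → (Fin n → ℝ)) (F : Set (Fin n → ℝ)) : Prop :=
  ∃ a : Fin n → ℝ, (∀ x ∈ coneOf v, 0 ≤ a ⬝ᵥ x) ∧ F = {x ∈ coneOf v | a ⬝ᵥ x = 0}

/-- The extreme-ray index sets of the `k`-dimensional faces. -/
def faceIdxSets (v : Fin p → (Fin n → ℝ)) (k : ℕ) : Set (Set (Fin p)) :=
  {S | ∃ F : Set (Fin n → ℝ), IsFace v F ∧
    Module.finrank ℝ (Submodule.span ℝ F) = k ∧ S = {i | v i ∈ F}}

/-- `σ` preserves the family of (ray index sets of) `k`-dimensional faces. -/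
def PreservesFaces (v : Fin p → (Fin n → ℝ)) (σ : Equiv.Perm (Fin p)) (k : ℕ) : Prop :=
  ∀ S ∈ faceIdxSets v k, (⇑σ) '' S ∈ faceIdxSets v k

/-- `σ ∈ Skel_k(C)`: preserves all faces of dimension at most `k`. -/
def SkelMem (v : Fin p → (Fin n → ℝ)) (k : ℕ) (σ : Equiv.Perm (Fin p)) : Prop :=
  ∀ l, l ≤ k → PreservesFaces v σ l

/-- `σ ∈ Comb(C)`: preserves the faces of all dimensions `0 ≤ k ≤ n-1`. -/
def CombMem (v : Fin p → (Fin n → ℝ)) (σ : Equiv.Perm (Fin p)) : Prop :=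
  ∀ l, l ≤ n - 1 → PreservesFaces v σ l

/-- `σ ∈ Lin_v(C)`: realized exactly on generators by an invertible matrix. -/
def LinMem (v : Fin p → (Fin n → ℝ)) (σ : Equiv.Perm (Fin p)) : Prop :=
  ∃ A : Matrix (Fin n) (Fin n) ℝ, IsUnit A.det ∧ ∀ i, A *ᵥ v i = v (σ i)

private lemma vecMulVec_mulVec' (a b w : Fin n → ℝ) :
    vecMulVec a b *ᵥ w = (b ⬝ᵥ w) • a := by
  ext i
  simp only [vecMulVec_apply, mulVec, dotProduct, Pi.smul_apply, smul_eq_mul,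
    Finset.mul_sum, Finset.sum_mul]
  exact Finset.sum_congr rfl fun x _ => by ring

private lemma sumVMV_mulVec (a b : Fin p → (Fin n → ℝ)) (w : Fin n → ℝ) :
    (∑ i, vecMulVec (a i) (b i)) *ᵥ w = ∑ i, (b i ⬝ᵥ w) • a i := by
  ext j
  simp only [mulVec, dotProduct, Matrix.sum_apply, Finset.sum_apply, Finset.sum_mul,
    Pi.smul_apply, smul_eq_mul, vecMulVec_apply, Finset.mul_sum]
  rw [Finset.sum_comm]
  exact Finset.sum_congr rfl fun i _ => Finset.sum_congr rfl fun x _ => by ring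

private lemma mul_vecMulVec_mul (A : Matrix (Fin n) (Fin n) ℝ) (a b : Fin n → ℝ) :
    A * vecMulVec a b * Aᵀ = vecMulVec (A *ᵥ a) (A *ᵥ b) := by
  rw [vecMulVec_eq Unit a b, vecMulVec_eq Unit (A *ᵥ a) (A *ᵥ b), Matrix.replicateCol_mulVec,
    ← Matrix.vecMul_transpose, Matrix.replicateRow_vecMul, Matrix.mul_assoc, Matrix.mul_assoc,
    Matrix.mul_assoc]

/-- Matrices agreeing on a spanning family are equal. -/
private lemma matrix_ext_of_span {v : Fin p → (Fin n → ℝ)}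
    (hspan : Submodule.span ℝ (Set.range v) = ⊤)
    {M N : Matrix (Fin n) (Fin n) ℝ} (h : ∀ j, M *ᵥ v j = N *ᵥ v j) : M = N := by
  have hlin : M.mulVecLin = N.mulVecLin := by
    apply LinearMap.ext_on hspan
    rintro x ⟨j, rfl⟩
    simpa using h j
  have hall : ∀ x, M *ᵥ x = N *ᵥ x := fun x => LinearMap.congr_fun hlin x
  ext i j
  have := congrFun (hall (Pi.single j 1)) i
  simpa [Matrix.mulVec_single] using this

/-- The key computation for the constructed matrix. -/
private lemma construct_mulVec (v : Fin p → (Fin n → ℝ)) (Q : Matrix (Fin n) (Fin n) ℝ)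
    (h1 : ∀ w, Q *ᵥ w = ∑ i, (v i ⬝ᵥ w) • v i) (hQQ : Q * Q⁻¹ = 1)
    (hQinvT : Q⁻¹ᵀ = Q⁻¹) (τ : Equiv.Perm (Fin p)) (M : Matrix (Fin n) (Fin n) ℝ)
    (hc : ∀ i j, v i ⬝ᵥ ((Q⁻¹ * M) *ᵥ v j) = v (τ i) ⬝ᵥ ((Q⁻¹ * M) *ᵥ v (τ j)))
    (j : Fin p) :
    (∑ i, vecMulVec (v (τ i)) (Q⁻¹ *ᵥ v i)) *ᵥ (M *ᵥ v j) = M *ᵥ v (τ j) := by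
  have hdot : ∀ (i j : Fin p), (Q⁻¹ *ᵥ v i) ⬝ᵥ (M *ᵥ v j) = v i ⬝ᵥ ((Q⁻¹ * M) *ᵥ v j) := by
    intro i j
    rw [← Matrix.mulVec_mulVec, Matrix.dotProduct_mulVec (v i), ← Matrix.mulVec_transpose,
      hQinvT]
  rw [sumVMV_mulVec]
  have step : ∀ i, ((Q⁻¹ *ᵥ v i) ⬝ᵥ (M *ᵥ v j)) • v (τ i)
      = ((Q⁻¹ *ᵥ v (τ i)) ⬝ᵥ (M *ᵥ v (τ j))) • v (τ i) := by
    intro i; rw [hdot, hdot, hc]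
  rw [Finset.sum_congr rfl fun i _ => step i]
  have := Equiv.sum_comp τ (fun m => ((Q⁻¹ *ᵥ v m) ⬝ᵥ (M *ᵥ v (τ j))) • v m)
  rw [this]
  have : ∑ m, ((Q⁻¹ *ᵥ v m) ⬝ᵥ (M *ᵥ v (τ j))) • v m
      = ∑ m, (v m ⬝ᵥ (Q⁻¹ *ᵥ (M *ᵥ v (τ j)))) • v m := by
    refine Finset.sum_congr rfl fun m _ => ?_
    rw [Matrix.dotProduct_mulVec (v m), ← Matrix.mulVec_transpose, hQinvT]
  rw [this, ← h1, Matrix.mulVec_mulVec, hQQ, Matrix.one_mulVec]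

/-- σ is realized by an invertible A commuting with every B_k and
permuting the vᵢ iff the vector-valued colors vᵢᵀ Q⁻¹ B_k vⱼ are σ-invariant. -/
theorem stmt_8 (n p r : ℕ) (v : Fin p → (Fin n → ℝ))
    (hspan : Submodule.span ℝ (Set.range v) = ⊤)
    (Q : Matrix (Fin n) (Fin n) ℝ) (hQ : Q = ∑ i, vecMulVec (v i) (v i))
    (B : Fin (r + 1) → Matrix (Fin n) (Fin n) ℝ) (hB : B 0 = 1)
    (σ : Equiv.Perm (Fin p)) :
    (∃ A : Matrix (Fin n) (Fin n) ℝ, IsUnit A.det ∧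
        (∀ i, A *ᵥ v i = v (σ i)) ∧ ∀ k, A * B k = B k * A) ↔
      ∀ (i j : Fin p) (k : Fin (r + 1)),
        v i ⬝ᵥ ((Q⁻¹ * B k) *ᵥ v j) = v (σ i) ⬝ᵥ ((Q⁻¹ * B k) *ᵥ v (σ j)) := by
  -- Basic facts about Q
  have h1 : ∀ w, Q *ᵥ w = ∑ i, (v i ⬝ᵥ w) • v i := by
    intro w; rw [hQ, sumVMV_mulVec]
  have hx0 : ∀ x : Fin n → ℝ, (∀ i, v i ⬝ᵥ x = 0) → x = 0 := by
    intro x hx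
    have hmem : x ∈ Submodule.span ℝ (Set.range v) := by rw [hspan]; trivial
    have hdot : ∀ y ∈ Submodule.span ℝ (Set.range v), y ⬝ᵥ x = 0 := by
      intro y hy
      induction hy using Submodule.span_induction with
      | mem y hy => obtain ⟨i, rfl⟩ := hy; exact hx i
      | zero => simp
      | add a b _ _ ha hb => rw [add_dotProduct, ha, hb, add_zero]
      | smul c a _ ha => rw [smul_dotProduct, ha, smul_zero]
    have := hdot x hmem
    exact dotProduct_self_eq_zero.mp this
  have hdetQ : IsUnit Q.det := by
    rw [isUnit_iff_ne_zero]
    intro hdet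
    obtain ⟨x, hx, hQx⟩ := (Matrix.exists_mulVec_eq_zero_iff).mpr hdet
    apply hx
    apply hx0
    intro i
    by_contra hne
    have hxQx : x ⬝ᵥ (Q *ᵥ x) = 0 := by rw [hQx, dotProduct_zero]
    have hsum : ∑ i, (v i ⬝ᵥ x) ^ 2 = 0 := by
      rw [← hxQx, h1]
      symm
      simp only [dotProduct, Finset.sum_apply, Pi.smul_apply, smul_eq_mul,
        Finset.mul_sum, Finset.sum_mul, pow_two]
      rw [Finset.sum_comm]
      refine Finset.sum_congr rfl fun i _ => Finset.sum_congr rfl fun j _ => ?_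
      exact Finset.sum_congr rfl fun k _ => by ring
    have : ∀ j ∈ Finset.univ, (v j ⬝ᵥ x) ^ 2 = 0 := by
      intro j _
      have hnn : ∀ j ∈ (Finset.univ : Finset (Fin p)), 0 ≤ (v j ⬝ᵥ x) ^ 2 :=
        fun j _ => sq_nonneg _
      exact (Finset.sum_eq_zero_iff_of_nonneg hnn).mp hsum j (Finset.mem_univ j)
    exact hne ((pow_eq_zero_iff two_ne_zero).mp (this i (Finset.mem_univ i)))
  have hQQ : Q * Q⁻¹ = 1 := Matrix.mul_nonsing_inv Q hdetQ
  have hQQ' : Q⁻¹ * Q = 1 := Matrix.nonsing_inv_mul Q hdetQ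
  have hQT : Qᵀ = Q := by
    rw [hQ, Matrix.transpose_sum]
    refine Finset.sum_congr rfl fun i _ => ?_
    ext a b; simp [vecMulVec_apply]; ring
  have hQinvT : Q⁻¹ᵀ = Q⁻¹ := by rw [Matrix.transpose_nonsing_inv, hQT]
  constructor
  · -- forward direction
    rintro ⟨A, hdet, hAv, hcomm⟩ i j k
    have hdetAT : IsUnit Aᵀ.det := by rwa [Matrix.det_transpose]
    -- A * Q * Aᵀ = Q
    have hAQA : A * Q * Aᵀ = Q := by
      rw [hQ, Finset.mul_sum, Finset.sum_mul]
      calc ∑ i, A * vecMulVec (v i) (v i) * Aᵀ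
          = ∑ i, vecMulVec (v (σ i)) (v (σ i)) := by
            refine Finset.sum_congr rfl fun i _ => ?_
            rw [mul_vecMulVec_mul, hAv]
        _ = ∑ i, vecMulVec (v i) (v i) :=
            Equiv.sum_comp σ (fun m => vecMulVec (v m) (v m))
    -- Aᵀ * Q⁻¹ * A = Q⁻¹
    have e1 : Q * Aᵀ⁻¹ = A * Q := by
      conv_lhs => rw [← hAQA]
      rw [Matrix.mul_assoc, Matrix.mul_nonsing_inv Aᵀ hdetAT, Matrix.mul_one]
    have e2 : Aᵀ * Q⁻¹ = Q⁻¹ * A⁻¹ := by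
      have h := congrArg (·⁻¹) e1
      simp only [Matrix.mul_inv_rev] at h
      rwa [Matrix.nonsing_inv_nonsing_inv Aᵀ hdetAT] at h
    have hkey : Aᵀ * Q⁻¹ * A = Q⁻¹ := by
      rw [e2, Matrix.mul_assoc, Matrix.nonsing_inv_mul A hdet, Matrix.mul_one]
    have obs : ∀ (M : Matrix (Fin n) (Fin n) ℝ) (x y : Fin n → ℝ),
        (A *ᵥ x) ⬝ᵥ (M *ᵥ y) = x ⬝ᵥ ((Aᵀ * M) *ᵥ y) := by
      intro M x y
      conv_rhs => rw [← Matrix.mulVec_mulVec, Matrix.dotProduct_mulVec,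
        Matrix.vecMul_transpose]
    -- now compute
    have hmat : Aᵀ * (Q⁻¹ * B k * A) = Q⁻¹ * B k := by
      calc Aᵀ * (Q⁻¹ * B k * A) = Aᵀ * Q⁻¹ * (B k * A) := by
            simp only [Matrix.mul_assoc]
        _ = Aᵀ * Q⁻¹ * (A * B k) := by rw [hcomm]
        _ = Aᵀ * Q⁻¹ * A * B k := by simp only [Matrix.mul_assoc]
        _ = Q⁻¹ * B k := by rw [hkey]
    rw [← hAv i, ← hAv j, Matrix.mulVec_mulVec, obs, hmat]
  · -- backward direction
    intro hc
    set A : Matrix (Fin n) (Fin n) ℝ := ∑ i, vecMulVec (v (σ i)) (Q⁻¹ *ᵥ v i) with hA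
    set A' : Matrix (Fin n) (Fin n) ℝ :=
      ∑ i, vecMulVec (v (σ⁻¹ i)) (Q⁻¹ *ᵥ v i) with hA'
    have hkey : ∀ (k : Fin (r + 1)) (j : Fin p),
        A *ᵥ (B k *ᵥ v j) = B k *ᵥ v (σ j) := fun k j =>
      construct_mulVec v Q h1 hQQ hQinvT σ (B k) (fun i j => hc i j k) j
    have hAv : ∀ j, A *ᵥ v j = v (σ j) := by
      intro j
      have := hkey 0 j
      rwa [hB, Matrix.one_mulVec, Matrix.one_mulVec] at this
    have hc1 : ∀ i j, v i ⬝ᵥ ((Q⁻¹ * (1 : Matrix (Fin n) (Fin n) ℝ)) *ᵥ v j)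
        = v (σ⁻¹ i) ⬝ᵥ ((Q⁻¹ * 1) *ᵥ v (σ⁻¹ j)) := by
      intro i j
      have := hc (σ⁻¹ i) (σ⁻¹ j) 0
      rw [hB] at this
      simpa using this.symm
    have hA'v : ∀ j, A' *ᵥ v j = v (σ⁻¹ j) := by
      intro j
      have := construct_mulVec v Q h1 hQQ hQinvT σ⁻¹ 1 hc1 j
      rwa [Matrix.one_mulVec, Matrix.one_mulVec] at this
    have hinv : A' * A = 1 := by
      apply matrix_ext_of_span hspan
      intro j
      rw [← Matrix.mulVec_mulVec, hAv, hA'v, Matrix.one_mulVec]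
      simp
    refine ⟨A, Matrix.isUnit_det_of_left_inverse hinv, hAv, fun k => ?_⟩
    apply matrix_ext_of_span hspan
    intro j
    rw [← Matrix.mulVec_mulVec, hkey k j, ← Matrix.mulVec_mulVec, hAv]
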